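/- Let T be a Trémaux tree of a connected graph G. There exists a TT-precedence order, i.e., a partial order ≺* on the edges of G such that for every vertex v and every pair of edges e, f outgoing from v: if low(e) ≺ low(f) then e ≺* f, and if low(e) = low(f) and f is a thick tree edge while e is not, then e ≺* f. -/

import Mathlib

variable {V : Type*}

/-- Tree order: `x ⪯ y` iff `x` lies on the unique `T`-path from the root `r` to `y`. -/
def tle (T : SimpleGraph V) (r x y : V) : Prop :=
  ∃ p : T.Walk r y, p.IsPath ∧ x ∈ p.support

/-- Strict tree order. -/
def stle (T : SimpleGraph V) (r x y : V) : Prop :=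
  tle T r x y ∧ x ≠ y

/-- `T` is a Trémaux tree of `G` rooted at `r`. -/
def IsTremaux (G T : SimpleGraph V) (r : V) : Prop :=
  T ≤ G ∧ T.IsTree ∧ ∀ x y, G.Adj x y → tle T r x y ∨ tle T r y x

/-- A back edge (non-tree edge), oriented downward: `a` is the upper endpoint, `b ≺ a`. -/
def BackEdge (G T : SimpleGraph V) (r a b : V) : Prop :=
  G.Adj a b ∧ ¬ T.Adj a b ∧ stle T r b a

/-- The set of which `low v` is the minimum: `v` together with all vertices joined
by a non-tree edge to a descendant of `v`. -/
def lowSet (G T : SimpleGraph V) (r v : V) : Set V :=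
  {v} ∪ {u | ∃ w, tle T r v w ∧ G.Adj u w ∧ ¬ T.Adj u w}

/-- `l` is the low point of the vertex `v`. -/
def IsLow (G T : SimpleGraph V) (r v l : V) : Prop :=
  l ∈ lowSet G T r v ∧ ∀ u ∈ lowSet G T r v, tle T r l u

/-- The edge from `v` to `w` is an edge going out of `v`: either a tree edge going up,
or a back edge going down. -/
def OutEdge (G T : SimpleGraph V) (r v w : V) : Prop :=
  (T.Adj v w ∧ stle T r v w) ∨ BackEdge G T r v w

/-- The back edge `(a,b)` lies above the edge `(v,w)` going out of `v`
(i.e. `f ⪰ e` in the order extended to edges). -/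
def AboveE (T : SimpleGraph V) (r v w a b : V) : Prop :=
  (T.Adj v w ∧ tle T r w a) ∨ (¬ T.Adj v w ∧ a = v ∧ b = w)

/-- Membership in the fringe of the edge `(v,w)` going out of `v`:
back edges `f = (a,b) ⪰ e` with `low f = b ≺ v`. -/
def InFringe (G T : SimpleGraph V) (r v w a b : V) : Prop :=
  BackEdge G T r a b ∧ AboveE T r v w a b ∧ stle T r b v

/-- The set of which `low e` is the minimum, for an edge `e = (v,w)` going out of `v`. -/
def lowESet (G T : SimpleGraph V) (r v w : V) : Set V :=
  {u | (T.Adj v w ∧ (u = v ∨ u ∈ lowSet G T r w)) ∨ (¬ T.Adj v w ∧ u = w)}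

/-- `l` is the low point of the edge `(v,w)` going out of `v`. -/
def IsLowE (G T : SimpleGraph V) (r v w l : V) : Prop :=
  l ∈ lowESet G T r v w ∧ ∀ u ∈ lowESet G T r v w, tle T r l u

/-- Membership in `Interlaced(e₁, e₂)` where `e₁ = (v,w₁)` and `l₂ = low e₂`:
back edges in the fringe of `e₁` whose low is strictly above `l₂`. -/
def InInterlaced (G T : SimpleGraph V) (r v w₁ l₂ a b : V) : Prop :=
  InFringe G T r v w₁ a b ∧ stle T r l₂ b

/-- `c` is an F-coloring of the back edges of `(G,T)` by `{-1,+1}`. -/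
def FColoring (G T : SimpleGraph V) (r : V) (c : V → V → ℤ) : Prop :=
  (∀ a b, BackEdge G T r a b → c a b = 1 ∨ c a b = -1) ∧
  ∀ v w₁ w₂ l₁ l₂, OutEdge G T r v w₁ → OutEdge G T r v w₂ → w₁ ≠ w₂ →
    IsLowE G T r v w₁ l₁ → IsLowE G T r v w₂ l₂ →
    (∀ a b a' b', InInterlaced G T r v w₁ l₂ a b →
        InInterlaced G T r v w₁ l₂ a' b' → c a b = c a' b') ∧
    (∀ a b a' b', InInterlaced G T r v w₂ l₁ a b →
        InInterlaced G T r v w₂ l₁ a' b' → c a b = c a' b') ∧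
    (∀ a b a' b', InInterlaced G T r v w₁ l₂ a b →
        InInterlaced G T r v w₂ l₁ a' b' → c a b ≠ c a' b')

/-- A strong F-coloring additionally makes each low set `L(v)` monochromatic. -/
def StrongAtLows (G T : SimpleGraph V) (r : V) (c : V → V → ℤ) : Prop :=
  ∀ v l, IsLow G T r v l →
    ∀ a b a' b', BackEdge G T r a b → tle T r v a → b = l →
      BackEdge G T r a' b' → tle T r v a' → b' = l → c a b = c a' b'

/-- `H` is a minor of `G` (branch-set formulation). -/
def IsMinorOf {W V : Type*} (H : SimpleGraph W) (G : SimpleGraph V) : Prop :=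
  ∃ ρ : V → Option W,
    (∀ w, ∃ v, ρ v = some w) ∧
    (∀ w, (G.induce {v | ρ v = some w}).Connected) ∧
    (∀ w₁ w₂, H.Adj w₁ w₂ → ∃ v₁ v₂, ρ v₁ = some w₁ ∧ ρ v₂ = some w₂ ∧ G.Adj v₁ v₂)

/-- Planarity (Kuratowski–Wagner characterization): no `K₅` and no `K₃,₃` minor. -/
def Planar (G : SimpleGraph V) : Prop :=
  ¬ IsMinorOf (SimpleGraph.completeGraph (Fin 5)) G ∧
  ¬ IsMinorOf (completeBipartiteGraph (Fin 3) (Fin 3)) G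

/-- The tree edge `(v,w)` going out of `v` is thick. -/
def ThickE (G T : SimpleGraph V) (r v w : V) : Prop :=
  T.Adj v w ∧ stle T r v w ∧ ∃ l, IsLow G T r w l ∧ stle T r l v ∧
    ∃ a b, BackEdge G T r a b ∧ tle T r w a ∧ stle T r l b ∧ stle T r b v

section Aux
attribute [local instance] Classical.propDecidable

lemma path_length_eq_dist {T : SimpleGraph V} (hT : T.IsTree) {x y : V}
    (p : T.Walk x y) (hp : p.IsPath) : p.length = T.dist x y := by
  obtain ⟨q, hq, hql⟩ := hT.isConnected.exists_path_of_dist x y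
  rw [← hql]
  exact congrArg _ ((hT.existsUnique_path x y).unique hp hq)

lemma stle_dist_lt {T : SimpleGraph V} (hT : T.IsTree) {r x y : V}
    (h : stle T r x y) : T.dist r x < T.dist r y := by
  classical
  obtain ⟨⟨p, hp, hx⟩, hne⟩ := h
  have hsplit := p.take_spec hx
  have hlen : (p.takeUntil x hx).length + (p.dropUntil x hx).length = p.length := by
    rw [← SimpleGraph.Walk.length_append, hsplit]
  have h1 : T.dist r x ≤ (p.takeUntil x hx).length := SimpleGraph.dist_le _
  have h2 : (p.dropUntil x hx).length ≠ 0 := fun hz =>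
    hne (SimpleGraph.Walk.eq_of_length_eq_zero hz)
  have := path_length_eq_dist hT p hp
  omega

lemma tle_antisymm {T : SimpleGraph V} (hT : T.IsTree) {r x y : V}
    (h1 : tle T r x y) (h2 : tle T r y x) : x = y := by
  by_contra hne
  have a1 := stle_dist_lt hT (x := x) (y := y) ⟨h1, hne⟩
  have a2 := stle_dist_lt hT (x := y) (y := x) ⟨h2, Ne.symm hne⟩
  omega

lemma stle_asymm {T : SimpleGraph V} (hT : T.IsTree) {r x y : V}
    (h1 : stle T r x y) (h2 : stle T r y x) : False :=
  h1.2 (tle_antisymm hT h1.1 h2.1)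

lemma outEdge_asymm {G T : SimpleGraph V} {r v w : V} (hT : T.IsTree)
    (h1 : OutEdge G T r v w) (h2 : OutEdge G T r w v) : False := by
  rcases h1 with ⟨ha, hs⟩ | ⟨_, hna, hs⟩ <;> rcases h2 with ⟨ha', hs'⟩ | ⟨_, hna', hs'⟩
  · exact stle_asymm hT hs hs'
  · exact hna' ha.symm
  · exact hna ha'.symm
  · exact stle_asymm hT hs hs'

lemma isLowE_unique {G T : SimpleGraph V} {r v w l l' : V} (hT : T.IsTree)
    (h1 : IsLowE G T r v w l) (h2 : IsLowE G T r v w l') : l = l' :=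
  tle_antisymm hT (h1.2 l' h2.1) (h2.2 l h1.1)

/-- Rank of an edge: twice the depth of its low point, plus one if thick. -/
noncomputable def erank (G T : SimpleGraph V) (r : V) (e : Sym2 V) : ℕ :=
  if h : ∃ q : V × V × V, e = s(q.1, q.2.1) ∧ OutEdge G T r q.1 q.2.1 ∧
      IsLowE G T r q.1 q.2.1 q.2.2 then
    2 * T.dist r h.choose.2.2 + (if ThickE G T r h.choose.1 h.choose.2.1 then 1 else 0)
  else 0

lemma erank_eq {G T : SimpleGraph V} {r v w l : V} (hT : T.IsTree)
    (ho : OutEdge G T r v w) (hl : IsLowE G T r v w l) :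
    erank G T r s(v, w) = 2 * T.dist r l + (if ThickE G T r v w then 1 else 0) := by
  classical
  have hex : ∃ q : V × V × V, s(v, w) = s(q.1, q.2.1) ∧ OutEdge G T r q.1 q.2.1 ∧
      IsLowE G T r q.1 q.2.1 q.2.2 := ⟨⟨v, w, l⟩, rfl, ho, hl⟩
  rw [erank, dif_pos hex]
  have hspec := hex.choose_spec
  set q := hex.choose with hq
  clear_value q
  obtain ⟨a, b, c⟩ := q
  obtain ⟨heq, ho', hl'⟩ := hspec
  rw [Sym2.eq_iff] at heq
  rcases heq with ⟨h1, h2⟩ | ⟨h1, h2⟩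
  · subst h1; subst h2
    rw [isLowE_unique hT hl' hl]
  · subst h1; subst h2
    exact (outEdge_asymm hT ho ho').elim

end Aux
/-- there exists a TT-precedence order on the edges of `G`. -/
theorem stmt15 [Fintype V] (G T : SimpleGraph V) (r : V)
    (h : IsTremaux G T r) :
    ∃ R : Sym2 V → Sym2 V → Prop, IsStrictOrder (Sym2 V) R ∧
      ∀ v w₁ w₂ l₁ l₂, OutEdge G T r v w₁ → OutEdge G T r v w₂ →
        IsLowE G T r v w₁ l₁ → IsLowE G T r v w₂ l₂ →
        (stle T r l₁ l₂ → R s(v, w₁) s(v, w₂)) ∧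
        (l₁ = l₂ → ThickE G T r v w₂ → ¬ ThickE G T r v w₁ →
          R s(v, w₁) s(v, w₂)) := by
  obtain ⟨-, hT, -⟩ := h
  refine ⟨fun e f => erank G T r e < erank G T r f,
    { toIrrefl := ⟨fun a => lt_irrefl _⟩, toIsTrans := ⟨fun a b c => Nat.lt_trans⟩ }, ?_⟩
  classical
  intro v w₁ w₂ l₁ l₂ ho1 ho2 hl1 hl2
  constructor
  · intro hs
    show erank G T r s(v, w₁) < erank G T r s(v, w₂)
    rw [erank_eq hT ho1 hl1, erank_eq hT ho2 hl2]
    have := stle_dist_lt hT hs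
    split_ifs <;> omega
  · rintro rfl h2 h1
    show erank G T r s(v, w₁) < erank G T r s(v, w₂)
    rw [erank_eq hT ho1 hl1, erank_eq hT ho2 hl2, if_pos h2, if_neg h1]
    omega
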